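/- Let N be a 3-prime left near-ring whose multiplicative center Z contains a nonzero element z such that z + z ∈ Z. Then the additive group (N,+) is abelian. -/
import Mathlib


class LeftNearRing (N : Type*) extends AddGroup N, Mul N where
  mul_assoc : ∀ a b c : N, a * b * c = a * (b * c)
  left_distrib : ∀ a b c : N, a * (b + c) = a * b + a * c

section aux
variable {N : Type*} [LeftNearRing N]

lemma lnr_mul_zero (a : N) : a * 0 = 0 := by
  have h := LeftNearRing.left_distrib a 0 0
  rw [add_zero] at h
  exact (add_left_cancel (a := a*0) (by rw [add_zero]; exact h)).symm

lemma lnr_mul_neg (a b : N) : a * (-b) = -(a * b) := by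
  have h : a * b + a * (-b) = 0 := by
    rw [← LeftNearRing.left_distrib, add_neg_cancel, lnr_mul_zero]
  exact (neg_eq_of_add_eq_zero_right h).symm

end aux

theorem stmt12 {N : Type*} [LeftNearRing N]
    (hp : ∀ a b : N, (∀ n : N, a * n * b = 0) → a = 0 ∨ b = 0)
    (z : N) (hz : ∀ x : N, z * x = x * z) (hz0 : z ≠ 0)
    (hzz : ∀ x : N, (z + z) * x = x * (z + z)) :
    ∀ x y : N, x + y = y + x := by
  intro x y
  have ld := LeftNearRing.left_distrib (N := N)
  have ma := LeftNearRing.mul_assoc (N := N)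
  -- (z+z)*w = z*w + z*w
  have key : ∀ w : N, (z + z) * w = z * w + z * w := by
    intro w
    rw [hzz, ld, ← hz]
  have hA : (z+z) * (x + y) = (z*x + z*x) + (z*y + z*y) := by
    rw [ld, key, key]
  have hB : (z+z) * (x + y) = (z*x + z*y) + (z*x + z*y) := by
    rw [key, ld]
  have hc : z * x + z * y = z * y + z * x := by
    have h := hA.symm.trans hB
    have h1 : z*x + (z*x + (z*y + z*y)) = z*x + (z*y + (z*x + z*y)) := by
      simpa [add_assoc] using h
    have h2 := add_left_cancel h1
    have h3 : (z*x + z*y) + z*y = (z*y + z*x) + z*y := by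
      simpa [add_assoc] using h2
    exact add_right_cancel h3
  have hzc : z * ((x + y) - (y + x)) = 0 := by
    rw [sub_eq_add_neg, ld, lnr_mul_neg, ld, ld, hc]
    exact add_neg_cancel _
  have hall : ∀ n : N, z * n * ((x + y) - (y + x)) = 0 := by
    intro n
    rw [ma, hz, ma, ← hz, hzc, lnr_mul_zero]
  rcases hp z _ hall with h | h
  · exact absurd h hz0
  · exact sub_eq_zero.mp h
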